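/- Let μ be a σ-finite positive measure on Ω and (T(t))_{t≥0} a positive, irreducible semigroup on L¹(Ω,μ) such that ∫ T(t)f dμ = ∫ f dμ for all f ∈ L¹(Ω,μ) and t ≥ 0, and fix(T) ≠ {0}. Then there exists e ∈ fix(T) with e(x) > 0 for μ-almost every x, and fix(T) = span{e} is one-dimensional. -/

import Mathlib

open MeasureTheory Filter Topology Set

set_option maxHeartbeats 1000000 in
set_option synthInstance.maxHeartbeats 400000 in
theorem stmt_12 {Ω : Type*} [MeasurableSpace Ω] (μ : Measure Ω) [SigmaFinite μ]
    (T : ℝ → (Lp ℝ 1 μ →L[ℝ] Lp ℝ 1 μ))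
    (hT0 : T 0 = ContinuousLinearMap.id ℝ (Lp ℝ 1 μ))
    (hsg : ∀ s t : ℝ, 0 ≤ s → 0 ≤ t → T (s + t) = (T s).comp (T t))
    (hpos : ∀ t, 0 ≤ t → ∀ f : Lp ℝ 1 μ, 0 ≤ f → 0 ≤ T t f)
    (hinv : ∀ t, 0 ≤ t → ∀ f : Lp ℝ 1 μ,
      ∫ x, (T t f : Ω → ℝ) x ∂μ = ∫ x, (f : Ω → ℝ) x ∂μ)
    (hirr : ∀ J : Submodule ℝ (Lp ℝ 1 μ), IsClosed (J : Set (Lp ℝ 1 μ)) →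
      (∀ f ∈ J, ∀ g : Lp ℝ 1 μ, |g| ≤ |f| → g ∈ J) →
      (∀ t, 0 ≤ t → ∀ f ∈ J, T t f ∈ J) → J = ⊥ ∨ J = ⊤)
    (hfix : ∃ f : Lp ℝ 1 μ, f ≠ 0 ∧ ∀ t, 0 ≤ t → T t f = f) :
    ∃ e : Lp ℝ 1 μ, (∀ t, 0 ≤ t → T t e = e) ∧
      (∀ᵐ x ∂μ, 0 < (e : Ω → ℝ) x) ∧
      ∀ h : Lp ℝ 1 μ, (∀ t, 0 ≤ t → T t h = h) → ∃ c : ℝ, h = c • e := by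
  classical
  obtain ⟨f₀, hf₀ne, hf₀fix⟩ := hfix
  have hint : ∀ g : Lp ℝ 1 μ, Integrable (g : Ω → ℝ) μ := fun g => L1.integrable_coeFn g
  -- monotonicity of T t
  have hmono : ∀ t, 0 ≤ t → ∀ g h : Lp ℝ 1 μ, g ≤ h → T t g ≤ T t h := by
    intro t ht g h hgh
    have h1 := hpos t ht (h - g) (by rwa [sub_nonneg])
    rw [map_sub] at h1
    exact sub_nonneg.mp h1
  -- |T t g| ≤ T t |g|
  have habsle : ∀ t, 0 ≤ t → ∀ g : Lp ℝ 1 μ, |T t g| ≤ T t |g| := by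
    intro t ht g
    rw [abs_le']
    refine ⟨hmono t ht g |g| (le_abs_self g), ?_⟩
    have := hmono t ht (-g) |g| (neg_le_abs g)
    rwa [map_neg] at this
  -- nonneg with zero integral is zero
  have hzero : ∀ g : Lp ℝ 1 μ, 0 ≤ g → ∫ x, (g : Ω → ℝ) x ∂μ = 0 → g = 0 := by
    intro g hg hgi
    have hg' : 0 ≤ᵐ[μ] (g : Ω → ℝ) := (Lp.coeFn_nonneg g).mpr hg
    have h0 := (integral_eq_zero_iff_of_nonneg_ae hg' (hint g)).mp hgi
    exact Lp.ext (h0.trans (Lp.coeFn_zero ℝ 1 μ).symm)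
  -- |g| is fixed whenever g is
  have hfixabs : ∀ g : Lp ℝ 1 μ, (∀ t, 0 ≤ t → T t g = g) → ∀ t, 0 ≤ t → T t |g| = |g| := by
    intro g hg t ht
    have h1 : |g| ≤ T t |g| := by
      calc |g| = |T t g| := by rw [hg t ht]
        _ ≤ T t |g| := habsle t ht g
    have h2 : ∫ x, ((T t |g| - |g| : Lp ℝ 1 μ) : Ω → ℝ) x ∂μ = 0 := by
      rw [integral_congr_ae (Lp.coeFn_sub (T t |g|) |g|)]
      rw [integral_sub' (hint _) (hint _), hinv t ht |g|, sub_self]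
    have h3 : T t |g| - |g| = 0 := hzero _ (by rwa [sub_nonneg]) h2
    rw [sub_eq_zero] at h3
    exact h3
  -- KEY: a nonzero nonnegative fixed point is a.e. strictly positive
  have hker : ∀ e : Lp ℝ 1 μ, (∀ t, 0 ≤ t → T t e = e) → 0 ≤ e → e ≠ 0 →
      ∀ᵐ x ∂μ, 0 < (e : Ω → ℝ) x := by
    intro e he he0 hene
    have he0' : 0 ≤ᵐ[μ] (e : Ω → ℝ) := (Lp.coeFn_nonneg e).mpr he0
    -- the ideal generated by e
    set C : Set (Lp ℝ 1 μ) := {g | ∃ c : ℝ, 0 ≤ c ∧ |g| ≤ c • e} with hC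
    have hmemiff : ∀ (g : Lp ℝ 1 μ) (c : ℝ),
        (|g| ≤ c • e) ↔ ∀ᵐ x ∂μ, |(g : Ω → ℝ) x| ≤ c * (e : Ω → ℝ) x := by
      intro g c
      rw [← Lp.coeFn_le]
      constructor <;> intro h <;>
        filter_upwards [h, Lp.coeFn_abs g, Lp.coeFn_smul c e] with x hx h1 h2
      · rw [h1, h2] at hx
        simpa [smul_eq_mul] using hx
      · rw [h1, h2]
        simpa [smul_eq_mul] using hx
    have hCsub : ∀ g₁ ∈ C, ∀ g₂ ∈ C, g₁ + g₂ ∈ C := by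
      intro g₁ hg₁ g₂ hg₂
      obtain ⟨c₁, hc₁0, hc₁⟩ := hg₁
      obtain ⟨c₂, hc₂0, hc₂⟩ := hg₂
      refine ⟨c₁ + c₂, by positivity, ?_⟩
      calc |g₁ + g₂| ≤ |g₁| + |g₂| := abs_add_le _ _
        _ ≤ c₁ • e + c₂ • e := add_le_add hc₁ hc₂
        _ = (c₁ + c₂) • e := (add_smul _ _ _).symm
    let J₀ : Submodule ℝ (Lp ℝ 1 μ) :=
      { carrier := C
        zero_mem' := ⟨0, le_refl 0, by simp⟩
        add_mem' := fun h1 h2 => hCsub _ h1 _ h2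
        smul_mem' := by
          intro a g hg
          obtain ⟨c, hc0, hc⟩ := hg
          refine ⟨|a| * c, by positivity, ?_⟩
          rw [hmemiff] at hc ⊢
          filter_upwards [hc, Lp.coeFn_smul a g] with x hx h1
          rw [h1]
          simp only [Pi.smul_apply, smul_eq_mul, abs_mul, mul_assoc]
          exact mul_le_mul_of_nonneg_left hx (abs_nonneg a) }
    have hJ₀C : (J₀ : Set (Lp ℝ 1 μ)) = C := by ext g; exact Iff.rfl
    set J := J₀.topologicalClosure with hJdef
    have hJset : (J : Set (Lp ℝ 1 μ)) = closure C := by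
      rw [hJdef, Submodule.topologicalClosure_coe, hJ₀C]
    have habs_cont : Continuous fun x : Lp ℝ 1 μ => |x| :=
      (LipschitzWith.of_dist_le_mul fun a b => by
        rw [NNReal.coe_one, one_mul, dist_eq_norm, dist_eq_norm]
        exact norm_abs_sub_abs a b).continuous
    have hJclosed : IsClosed (J : Set (Lp ℝ 1 μ)) := Submodule.isClosed_topologicalClosure _
    have hJideal : ∀ f ∈ J, ∀ g : Lp ℝ 1 μ, |g| ≤ |f| → g ∈ J := by
      intro f hf g hg
      have hf' : f ∈ closure C := by rwa [← hJset]
      obtain ⟨u, hu, hul⟩ := mem_closure_iff_seq_limit.mp hf'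
      have key : ∀ n, (g ⊓ |u n|) ⊔ (-|u n|) ∈ C := by
        intro n
        obtain ⟨c, hc0, hc⟩ := hu n
        refine ⟨c, hc0, le_trans ?_ hc⟩
        rw [abs_le']
        constructor
        · exact sup_le inf_le_right (neg_le_self (abs_nonneg _))
        · rw [neg_sup]
          exact inf_le_right.trans (by rw [neg_neg])
      have hcont : Continuous fun x : Lp ℝ 1 μ => (g ⊓ |x|) ⊔ (-|x|) :=
        (continuous_const.inf habs_cont).sup habs_cont.neg
      have hlim : Tendsto (fun n => (g ⊓ |u n|) ⊔ (-|u n|)) atTop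
          (𝓝 ((g ⊓ |f|) ⊔ (-|f|))) := (hcont.tendsto f).comp hul
      have heq : (g ⊓ |f|) ⊔ (-|f|) = g := by
        rw [inf_eq_left.mpr (le_trans (le_abs_self g) hg),
          sup_eq_left.mpr (neg_le.mpr ((neg_le_abs g).trans hg))]
      rw [heq] at hlim
      have : g ∈ closure C := mem_closure_iff_seq_limit.mpr ⟨_, key, hlim⟩
      rwa [← hJset] at this
    have hJinv : ∀ t, 0 ≤ t → ∀ f ∈ J, T t f ∈ J := by
      intro t ht f hf
      have hf' : f ∈ closure C := by rwa [← hJset]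
      obtain ⟨u, hu, hul⟩ := mem_closure_iff_seq_limit.mp hf'
      have key : ∀ n, T t (u n) ∈ C := by
        intro n
        obtain ⟨c, hc0, hc⟩ := hu n
        refine ⟨c, hc0, ?_⟩
        calc |T t (u n)| ≤ T t |u n| := habsle t ht _
          _ ≤ T t (c • e) := hmono t ht _ _ hc
          _ = c • T t e := map_smul _ _ _
          _ = c • e := by rw [he t ht]
      have hlim : Tendsto (fun n => T t (u n)) atTop (𝓝 (T t f)) :=
        ((T t).continuous.tendsto f).comp hul
      have : T t f ∈ closure C := mem_closure_iff_seq_limit.mpr ⟨_, key, hlim⟩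
      rwa [← hJset] at this
    have heJ : e ∈ J := by
      have heC : e ∈ C := ⟨1, zero_le_one, by rw [abs_of_nonneg he0, one_smul]⟩
      exact Submodule.le_topologicalClosure J₀ heC
    have hJtop : J = ⊤ := by
      rcases hirr J hJclosed hJideal hJinv with hbot | htop
      · exfalso
        exact hene (by simpa [hbot] using heJ)
      · exact htop
    -- a strictly positive integrable function
    obtain ⟨w, hw_pos, hw_meas, hw_int⟩ :=
      exists_pos_lintegral_lt_of_sigmaFinite μ (ε := 1) one_ne_zero
    have hWint : Integrable (fun x => (w x : ℝ)) μ := by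
      refine ⟨(measurable_coe_nnreal_real.comp hw_meas).aestronglyMeasurable, ?_⟩
      simp only [HasFiniteIntegral, NNReal.nnnorm_eq]
      simpa only [NNReal.enorm_eq] using hw_int.trans_le le_top
    set G : Lp ℝ 1 μ := (memLp_one_iff_integrable.mpr hWint).toLp _ with hGdef
    have hGcoe : (G : Ω → ℝ) =ᵐ[μ] fun x => (w x : ℝ) := MemLp.coeFn_toLp _
    -- measurable representative of e and its vanishing set
    have he_meas := (Lp.aestronglyMeasurable e)
    set e' := he_meas.mk (e : Ω → ℝ) with he'def
    have hee' : (e : Ω → ℝ) =ᵐ[μ] e' := he_meas.ae_eq_mk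
    set A : Set Ω := {x | e' x ≤ 0} with hA
    have hAmeas : MeasurableSet A := by
      exact measurableSet_le he_meas.stronglyMeasurable_mk.measurable measurable_const
    -- the continuous functional
    set F : Lp ℝ 1 μ → ℝ := fun g => ∫ x in A, |(g : Ω → ℝ) x| ∂μ with hF
    have hFlip : LipschitzWith 1 F := by
      refine LipschitzWith.of_dist_le_mul fun g h => ?_
      rw [NNReal.coe_one, one_mul, Real.dist_eq]
      have hgA := ((hint g).abs).restrict (s := A)
      have hhA := ((hint h).abs).restrict (s := A)
      have h1 : F g - F h = ∫ x in A, (|(g : Ω → ℝ) x| - |(h : Ω → ℝ) x|) ∂μ := by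
        rw [integral_sub hgA hhA]
      have h2 : |F g - F h| ≤ ∫ x in A, |(g : Ω → ℝ) x - (h : Ω → ℝ) x| ∂μ := by
        rw [h1, ← Real.norm_eq_abs]
        refine (norm_integral_le_integral_norm _).trans ?_
        simp only [Real.norm_eq_abs]
        refine integral_mono ((hgA.sub hhA).abs) (((hint g).sub (hint h)).abs.restrict) ?_
        intro x
        exact abs_abs_sub_abs_le_abs_sub _ _
      refine h2.trans ?_
      have h3 : ∫ x in A, |(g : Ω → ℝ) x - (h : Ω → ℝ) x| ∂μ
          ≤ ∫ x, |(g : Ω → ℝ) x - (h : Ω → ℝ) x| ∂μ :=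
        setIntegral_le_integral ((hint g).sub (hint h)).abs
          (Eventually.of_forall fun x => abs_nonneg _)
      refine h3.trans ?_
      rw [dist_eq_norm, L1.norm_eq_integral_norm]
      refine le_of_eq (integral_congr_ae ?_)
      filter_upwards [Lp.coeFn_sub g h] with x hx
      rw [hx, Pi.sub_apply, Real.norm_eq_abs]
    -- F vanishes on C
    have hFC : ∀ g ∈ C, F g = 0 := by
      intro g hg
      obtain ⟨c, hc0, hc⟩ := hg
      rw [hmemiff] at hc
      have hz : ∀ᵐ x ∂μ.restrict A, |(g : Ω → ℝ) x| = 0 := by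
        rw [ae_restrict_iff' hAmeas]
        filter_upwards [hc, hee', he0'] with x hx h1 h2
        intro hxA
        have he0x : (e : Ω → ℝ) x = 0 := le_antisymm (h1 ▸ hxA) h2
        have : |(g : Ω → ℝ) x| ≤ 0 := by
          simpa [he0x] using hx
        exact le_antisymm this (abs_nonneg _)
      rw [hF]
      simp only
      rw [integral_congr_ae hz, integral_zero]
    -- G lies in the closure of C, hence F G = 0
    have hGJ : G ∈ closure C := by
      have h1 : G ∈ (J : Set (Lp ℝ 1 μ)) := by rw [hJtop]; simp
      rwa [hJset] at h1
    have hFG : F G = 0 := by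
      have hsub : closure C ⊆ F ⁻¹' {0} := by
        refine closure_minimal ?_ (IsClosed.preimage hFlip.continuous isClosed_singleton)
        intro g hg
        exact hFC g hg
      exact hsub hGJ
    -- hence μ A = 0
    have hGz : ∀ᵐ x ∂μ.restrict A, |(G : Ω → ℝ) x| = 0 := by
      have hnn : 0 ≤ᵐ[μ.restrict A] fun x => |(G : Ω → ℝ) x| :=
        Eventually.of_forall fun x => abs_nonneg _
      exact (integral_eq_zero_iff_of_nonneg_ae hnn ((hint G).abs.restrict)).mp hFG
    have hfalse : ∀ᵐ _x ∂μ.restrict A, False := by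
      filter_upwards [hGz, ae_restrict_of_ae hGcoe] with x h1 h2
      rw [h2] at h1
      simp only [abs_eq_zero] at h1
      have h3 : w x = 0 := by exact_mod_cast h1
      exact (hw_pos x).ne' h3
    have hA0 : μ A = 0 := by
      have : μ.restrict A = 0 := ae_eq_bot.mp (eventually_false_iff_eq_bot.mp hfalse)
      rw [← Measure.restrict_apply_univ, this]
      simp
    have hpos' : ∀ᵐ x ∂μ, 0 < e' x := by
      rw [ae_iff]
      convert hA0 using 2
      ext x
      simp [hA, not_lt]
    filter_upwards [hpos', hee'] with x h1 h2
    rwa [h2]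
  -- the fixed positive element
  set e : Lp ℝ 1 μ := |f₀| with hedef
  have hefix : ∀ t, 0 ≤ t → T t e = e := hfixabs f₀ hf₀fix
  have he0 : 0 ≤ e := by
    rw [← Lp.coeFn_nonneg]
    filter_upwards [Lp.coeFn_abs f₀] with x hx
    rw [hedef, hx]
    exact abs_nonneg _
  have hene : e ≠ 0 := by
    rw [hedef]
    intro hz
    apply hf₀ne
    refine Lp.ext ?_
    have h1 : ((|f₀| : Lp ℝ 1 μ) : Ω → ℝ) =ᵐ[μ] ((0 : Lp ℝ 1 μ) : Ω → ℝ) := by rw [hz]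
    filter_upwards [h1, Lp.coeFn_abs f₀, Lp.coeFn_zero ℝ 1 μ] with x hx h2 h3
    rw [h3]
    have h4 : |(f₀ : Ω → ℝ) x| = 0 := by rw [← h2, hx]; exact h3
    rwa [abs_eq_zero] at h4
  have hepos := hker e hefix he0 hene
  refine ⟨e, hefix, hepos, ?_⟩
  -- one-dimensionality
  intro h hh
  have heint : ∫ x, (e : Ω → ℝ) x ∂μ ≠ 0 := by
    intro h0
    exact hene (hzero e he0 h0)
  set c : ℝ := (∫ x, (h : Ω → ℝ) x ∂μ) / (∫ x, (e : Ω → ℝ) x ∂μ) with hcdef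
  refine ⟨c, ?_⟩
  set g : Lp ℝ 1 μ := h - c • e with hgdef
  have hgfix : ∀ t, 0 ≤ t → T t g = g := by
    intro t ht
    rw [hgdef, map_sub, _root_.map_smul, hh t ht, hefix t ht]
  have hgcoe : (g : Ω → ℝ) =ᵐ[μ] fun x => (h : Ω → ℝ) x - c * (e : Ω → ℝ) x := by
    filter_upwards [Lp.coeFn_sub h (c • e), Lp.coeFn_smul c e] with x h1 h2
    rw [h1, Pi.sub_apply, h2, Pi.smul_apply, smul_eq_mul]
  have hgint : ∫ x, (g : Ω → ℝ) x ∂μ = 0 := by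
    rw [integral_congr_ae hgcoe, integral_sub (hint h) (by exact ((hint e).const_mul c)),
      integral_const_mul, hcdef, div_mul_cancel₀ _ heint, sub_self]
  have habsint : Integrable (fun x => |(g : Ω → ℝ) x|) μ := (hint g).abs
  have habscoe : ((|g| : Lp ℝ 1 μ) : Ω → ℝ) =ᵐ[μ] fun x => |(g : Ω → ℝ) x| := Lp.coeFn_abs g
  -- positive part
  set p : Lp ℝ 1 μ := (2⁻¹ : ℝ) • (g + |g|) with hpdef
  have hpcoe : (p : Ω → ℝ) =ᵐ[μ] fun x => 2⁻¹ * ((g : Ω → ℝ) x + |(g : Ω → ℝ) x|) := by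
    filter_upwards [Lp.coeFn_smul (2⁻¹ : ℝ) (g + |g|), Lp.coeFn_add g |g|, habscoe] with x h1 h2 h3
    rw [hpdef]
    rw [h1, Pi.smul_apply, h2, Pi.add_apply, h3, smul_eq_mul]
  have hpfix : ∀ t, 0 ≤ t → T t p = p := by
    intro t ht
    rw [hpdef, _root_.map_smul, map_add, hgfix t ht, hfixabs g hgfix t ht]
  have hp0 : 0 ≤ p := by
    rw [← Lp.coeFn_nonneg]
    filter_upwards [hpcoe] with x hx
    simp only [Pi.zero_apply]
    rw [hx]
    have h1 := neg_abs_le ((g : Ω → ℝ) x)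
    linarith
  have hgz : g = 0 := by
    -- ∫ p = 2⁻¹ * ∫ |g|
    have hpint : ∫ x, (p : Ω → ℝ) x ∂μ = 2⁻¹ * ∫ x, |(g : Ω → ℝ) x| ∂μ := by
      rw [integral_congr_ae hpcoe]
      rw [show (fun x => 2⁻¹ * ((g : Ω → ℝ) x + |(g : Ω → ℝ) x|))
          = fun x => 2⁻¹ * (g : Ω → ℝ) x + 2⁻¹ * |(g : Ω → ℝ) x| by ext x; ring]
      rw [integral_add ((hint g).const_mul _) (habsint.const_mul _),
        integral_const_mul, integral_const_mul, hgint, mul_zero, zero_add]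
    by_cases hpz : p = 0
    · -- then ∫ |g| = 0 so g = 0
      have : ∫ x, |(g : Ω → ℝ) x| ∂μ = 0 := by
        have h0 : ∫ x, (p : Ω → ℝ) x ∂μ = 0 := by
          rw [hpz]
          rw [integral_congr_ae (Lp.coeFn_zero ℝ 1 μ)]
          simp
        rw [h0] at hpint
        linarith [hpint]
      have hgz' := (integral_eq_zero_iff_of_nonneg_ae
        (Eventually.of_forall fun x => abs_nonneg _) habsint).mp this
      refine Lp.ext ?_
      have : (g : Ω → ℝ) =ᵐ[μ] 0 := by
        filter_upwards [hgz'] with x hx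
        simpa [abs_eq_zero] using hx
      exact this.trans (Lp.coeFn_zero ℝ 1 μ).symm
    · -- p > 0 a.e., hence g > 0 a.e., so |g| = g a.e., but then q = 0 means ∫|g| = 0 anyway
      have hppos := hker p hpfix hp0 hpz
      have hgpos : ∀ᵐ x ∂μ, 0 < (g : Ω → ℝ) x := by
        filter_upwards [hppos, hpcoe] with x h1 h2
        rw [h2] at h1
        by_contra hle
        push_neg at hle
        rw [abs_of_nonpos hle] at h1
        simp at h1
      -- then ∫ g = ∫ |g| = 0 forces μ-a.e. g = 0, contradicting positivity unless μ trivial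
      have : ∫ x, |(g : Ω → ℝ) x| ∂μ = 0 := by
        rw [← hgint]
        refine integral_congr_ae ?_
        filter_upwards [hgpos] with x hx
        rw [abs_of_pos hx]
      have hgz' := (integral_eq_zero_iff_of_nonneg_ae
        (Eventually.of_forall fun x => abs_nonneg _) habsint).mp this
      refine Lp.ext ?_
      have : (g : Ω → ℝ) =ᵐ[μ] 0 := by
        filter_upwards [hgz'] with x hx
        simpa [abs_eq_zero] using hx
      exact this.trans (Lp.coeFn_zero ℝ 1 μ).symm
  rw [hgdef] at hgz
  rw [sub_eq_zero] at hgz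
  exact hgz
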